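/- For elementary cellular automaton Rule 45 on a ring of size n, a configuration x ∈ {0,1}^n is a fixed point of the synchronous (parallel) update if and only if n is a multiple of 3 and x is one of the three rotations of the periodic word (001) repeated n/3 times. -/
import Mathlib


/-- Single-cell update: replace the state of cell `i` by the local rule applied
to its neighborhood on the ring `ZMod n`. -/
def eupdate (n : ℕ) (f : Bool → Bool → Bool → Bool) (x : ZMod n → Bool) (i : ZMod n) :
    ZMod n → Bool :=
  Function.update x i (f (x (i - 1)) (x i) (x (i + 1)))

/-- Synchronous (parallel) step. -/
def parStep (n : ℕ) (f : Bool → Bool → Bool → Bool) (x : ZMod n → Bool) : ZMod n → Bool :=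
  fun i => f (x (i - 1)) (x i) (x (i + 1))

/-- `x` is a fixed point of the parallel dynamics. -/
def IsFixedConfig (n : ℕ) (f : Bool → Bool → Bool → Bool) (x : ZMod n → Bool) : Prop :=
  ∀ i : ZMod n, f (x (i - 1)) (x i) (x (i + 1)) = x i

/-- One full sequential step under the sequential update mode `μ`
(a permutation of the cells): update cells one at a time in the order
`μ 0, μ 1, …, μ (n-1)`. -/
def seqStep (n : ℕ) (f : Bool → Bool → Bool → Bool) (μ : Fin n ≃ ZMod n)
    (x : ZMod n → Bool) : ZMod n → Bool :=
  (List.finRange n).foldl (fun y k => eupdate n f y (μ k)) x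

/-- One full sequential step under the descending order `(n-1, n-2, …, 0)`. -/
def seqStepDesc (n : ℕ) (f : Bool → Bool → Bool → Bool) (x : ZMod n → Bool) : ZMod n → Bool :=
  ((List.range n).reverse).foldl (fun y k => eupdate n f y (k : ZMod n)) x

/-- One full sequential step under the ascending order `(0, 1, …, n-1)`. -/
def seqStepAsc (n : ℕ) (f : Bool → Bool → Bool → Bool) (x : ZMod n → Bool) : ZMod n → Bool :=
  (List.range n).foldl (fun y k => eupdate n f y (k : ZMod n)) x

def rule45 : Bool → Bool → Bool → Bool
  | true, true, true => false
  | true, true, false => false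
  | true, false, true => true
  | true, false, false => false
  | false, true, true => true
  | false, true, false => true
  | false, false, true => false
  | false, false, false => true

lemma fixed_shift (n : ℕ) (f : Bool → Bool → Bool → Bool) (x : ZMod n → Bool) :
    IsFixedConfig n f x ↔ ∀ j : ZMod n, f (x j) (x (j+1)) (x (j+1+1)) = x (j+1) := by
  constructor
  · intro h j
    have := h (j+1)
    simpa [add_sub_cancel_right] using this
  · intro h i
    have := h (i-1)
    simpa [sub_add_cancel] using this

theorem rule45_fixed_points (n : ℕ) (hn : 0 < n) (x : ZMod n → Bool) :
    IsFixedConfig n rule45 x ↔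
      (3 ∣ n ∧ ∃ k < 3, ∀ i : ZMod n, x i = decide ((i.val + k) % 3 = 2)) := by
  haveI : NeZero n := ⟨hn.ne'⟩
  rw [fixed_shift]
  constructor
  · intro H
    have hno : ∀ j : ZMod n, ¬ (x j = true ∧ x (j+1) = true) := by
      rintro j ⟨h1, h2⟩
      have h := H j
      cases h3 : x (j+1+1) <;> simp_all [rule45]
    have hstep : ∀ j : ZMod n, x (j+1+1) = (!(x j) && !(x (j+1))) := by
      intro j
      have h1 := H j
      have h2 := H (j+1)
      cases ha : x j <;> cases hb : x (j+1) <;> cases hc : x (j+1+1) <;>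
        cases hd : x (j+1+1+1) <;> simp_all [rule45]
    have hper : ∀ j : ZMod n, x (j+1+1+1) = x j := by
      intro j
      have h1 := hstep j
      have h2 := hstep (j+1)
      have h3 := hno j
      cases ha : x j <;> cases hb : x (j+1) <;> simp_all [rule45]
    -- periodicity by multiples of 3
    have hperN : ∀ (j : ZMod n) (m : ℕ), x (j + 3 * (m : ZMod n)) = x j := by
      intro j m
      induction m with
      | zero => simp
      | succ m ih =>
        have e : j + 3 * ((m + 1 : ℕ) : ZMod n) = (j + 3 * (m : ZMod n)) + 1 + 1 + 1 := by
          push_cast; ring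
        rw [e, hper, ih]
    -- 3 divides n
    have h3n : 3 ∣ n := by
      by_contra h3
      have hcop : Nat.Coprime 3 n := (Nat.prime_three.coprime_iff_not_dvd).2 h3
      have hu : IsUnit ((3 : ℕ) : ZMod n) := (ZMod.isUnit_iff_coprime 3 n).2 hcop
      obtain ⟨v, hv⟩ := hu
      have hone : (3 : ZMod n) * ((v⁻¹ : (ZMod n)ˣ) : ZMod n) = 1 := by
        have : ((v : ZMod n)) * ((v⁻¹ : (ZMod n)ˣ) : ZMod n) = 1 := by
          rw [← Units.val_mul, mul_inv_cancel, Units.val_one]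
        rw [← this, hv]; push_cast; ring
      have hsucc : ∀ j : ZMod n, x (j + 1) = x j := by
        intro j
        have := hperN j ((v⁻¹ : (ZMod n)ˣ) : ZMod n).val
        rwa [ZMod.natCast_zmod_val, hone] at this
      have hconst : ∀ m : ℕ, x ((m : ℕ) : ZMod n) = x 0 := by
        intro m
        induction m with
        | zero => simp
        | succ m ih => push_cast; rw [hsucc, ih]
      have hall : ∀ j : ZMod n, x j = x 0 := by
        intro j; have := hconst j.val; rwa [ZMod.natCast_zmod_val] at this
      have h0 := H 0
      rw [hall (0+1), hall (0+1+1)] at h0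
      cases hx0 : x 0 <;> simp_all [rule45]
    refine ⟨h3n, ?_⟩
    -- choose k from the first two cells
    have hbase : ∃ k < 3, x (0 : ZMod n) = decide ((0 + k) % 3 = 2) ∧
        x ((0 : ZMod n) + 1) = decide ((1 + k) % 3 = 2) := by
      have h3 := hno 0
      cases h0 : x (0 : ZMod n) <;> cases h1 : x ((0 : ZMod n) + 1)
      · exact ⟨0, by norm_num, by simp, by simp⟩
      · exact ⟨1, by norm_num, by simp, by simp⟩
      · exact ⟨2, by norm_num, by simp, by simp⟩
      · exact absurd ⟨h0, h1⟩ h3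
    obtain ⟨k, hk3, hb0, hb1⟩ := hbase
    refine ⟨k, hk3, ?_⟩
    have hpat : ∀ m : ℕ, x ((m : ℕ) : ZMod n) = decide ((m + k) % 3 = 2) ∧
        x ((m + 1 : ℕ) : ZMod n) = decide ((m + 1 + k) % 3 = 2) := by
      intro m
      induction m with
      | zero =>
        constructor
        · simpa using hb0
        · have e : ((0 + 1 : ℕ) : ZMod n) = (0 : ZMod n) + 1 := by push_cast; ring
          rw [e]; simpa using hb1
      | succ m ih =>
        refine ⟨ih.2, ?_⟩
        have e : ((m + 1 + 1 : ℕ) : ZMod n) = ((m : ℕ) : ZMod n) + 1 + 1 := by push_cast; ring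
        have e1 : ((m + 1 : ℕ) : ZMod n) = ((m : ℕ) : ZMod n) + 1 := by push_cast; ring
        rw [e, hstep, ← e1, ih.1, ih.2]
        have hr : (m + k) % 3 = 0 ∨ (m + k) % 3 = 1 ∨ (m + k) % 3 = 2 := by omega
        rcases hr with h | h | h <;>
          · have h1 : (m + 1 + k) % 3 = (((m + k) % 3) + 1) % 3 := by omega
            have h2 : (m + 1 + 1 + k) % 3 = (((m + k) % 3) + 2) % 3 := by omega
            rw [h1, h2, h]
            decide
    intro i
    have := (hpat i.val).1
    rwa [ZMod.natCast_zmod_val] at this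
  · rintro ⟨h3, k, hk, hx⟩ j
    have h3' : 3 ≤ n := Nat.le_of_dvd hn h3
    haveI : Fact (1 < n) := ⟨by omega⟩
    have hv1 : (1 : ZMod n).val = 1 := ZMod.val_one n
    have e1 : (j + 1).val % 3 = (j.val + 1) % 3 := by
      rw [ZMod.val_add, hv1, Nat.mod_mod_of_dvd _ h3]
    have e2 : (j + 1 + 1).val % 3 = (j.val + 2) % 3 := by
      rw [ZMod.val_add, hv1, Nat.mod_mod_of_dvd _ h3]
      omega
    rw [hx j, hx (j+1), hx (j+1+1)]
    have hb : ((j + 1).val + k) % 3 = ((j.val + k) % 3 + 1) % 3 := by omega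
    have hc : ((j + 1 + 1).val + k) % 3 = ((j.val + k) % 3 + 2) % 3 := by omega
    have ha : (j.val + k) % 3 = (j.val + k) % 3 % 3 := by omega
    rw [hb, hc]
    have hr : (j.val + k) % 3 = 0 ∨ (j.val + k) % 3 = 1 ∨ (j.val + k) % 3 = 2 := by omega
    rcases hr with h | h | h <;> rw [h] <;> decide
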